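/- For every function σ : A → A' between sets of actions and every Muller automaton Λ over P(A), the automaton Λ^σ over P(A') defined by keeping the same states, initial states, and final-state sets, and with transitions Δ^σ = {(p, α', q) | (p, σ⁻¹(α'), q) ∈ Δ}, together with the identity map as a homomorphism Λ^σ|_σ → Λ, is a universal arrow from the reduct functor _|_σ to Λ. That is, for every Muller automaton Λ' over P(A') and every homomorphism h : Λ'|_σ → Λ there exists a unique homomorphism g : Λ' → Λ^σ with g|_σ composed with the identity equal to h (i.e. g = h as a function and g is a homomorphism Λ' → Λ^σ). -/

import Mathlib

structure Muller (A : Type) where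
  Q : Type
  fin : Finite Q
  trans : Q → Set A → Q → Prop
  init : Set Q
  final : Set (Set Q)

namespace Muller

variable {A A' : Type}

def IsHom (M₁ M₂ : Muller A) (h : M₁.Q → M₂.Q) : Prop :=
  (∀ p a q, M₁.trans p a q → M₂.trans (h p) a (h q)) ∧
  (h '' M₁.init ⊆ M₂.init) ∧
  (∀ S ∈ M₁.final, h '' S ∈ M₂.final)

/-- The reduct `Λ'|_σ` of an automaton over `𝒫(A')` along `σ : A → A'`:
same states, initial states and final-state sets, transitions
`Δ'|_σ = {(p, σ⁻¹(α'), q) | (p, α', q) ∈ Δ'}`. -/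
def reduct (σ : A → A') (M : Muller A') : Muller A where
  Q := M.Q
  fin := M.fin
  trans p α q := ∃ α', α = σ ⁻¹' α' ∧ M.trans p α' q
  init := M.init
  final := M.final

/-- The automaton `Λ^σ` over `𝒫(A')`: same states, initial states and final-state
sets, transitions `Δ^σ = {(p, α', q) | (p, σ⁻¹(α'), q) ∈ Δ}`. -/
def lift (σ : A → A') (M : Muller A) : Muller A' where
  Q := M.Q
  fin := M.fin
  trans p α' q := M.trans p (σ ⁻¹' α') q
  init := M.init
  final := M.final

end Muller

/-- `(Λ^σ, id)` is a universal arrow from the reduct functor `_|_σ` to `Λ`: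
the identity is a homomorphism `Λ^σ|_σ → Λ`, and every homomorphism `h : Λ'|_σ → Λ`
equals (as a function, after composing with the identity) a unique homomorphism
`g : Λ' → Λ^σ`. -/
theorem lift_is_universal {A A' : Type} (σ : A → A') (M : Muller A) :
    Muller.IsHom (Muller.reduct σ (Muller.lift σ M)) M id ∧
    ∀ (M' : Muller A') (h : (Muller.reduct σ M').Q → M.Q),
      Muller.IsHom (Muller.reduct σ M') M h →
      ∃! g : M'.Q → (Muller.lift σ M).Q,
        Muller.IsHom M' (Muller.lift σ M) g ∧ g = h := by
  constructor
  · refine ⟨?_, ?_, ?_⟩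
    · rintro p a q ⟨α', rfl, ht⟩
      exact ht
    · simp [Muller.reduct, Muller.lift]
    · intro S hS; have e : id '' S = S := Set.image_id S; exact (congrArg (fun T => T ∈ M.final) e).mpr hS
  · intro M' h hh
    refine ⟨h, ⟨⟨?_, hh.2.1, hh.2.2⟩, rfl⟩, ?_⟩
    · intro p a q ht
      exact hh.1 p (σ ⁻¹' a) q ⟨a, rfl, ht⟩
    · rintro g ⟨-, rfl⟩; rfl
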